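/- Let k be an algebraically closed field of characteristic p > 3, and let A = k[x, y]/(x^{p^2 − p}·y^p + y^{p^2} − x^{p^2 − 1}·y − x), which is an integral domain, with fraction field K. Then the element x^{p^2 − p}·y^p + y^{p^2} of K is not a p^2-th power in K, i.e. there is no g ∈ K with g^{p^2} = x^{p^2 − p}·y^p + y^{p^2}. -/

import Mathlib

set_option synthInstance.maxHeartbeats 1000000
set_option maxHeartbeats 1000000

open MvPolynomial in
/-- The affine equation `x^{p²-p}·y^p + y^{p²} - x^{p²-1}·y - x` of the chart
`Z = 1` of the plane curve of Example 2.3 (variables `X 0 = x`, `X 1 = y`). -/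
noncomputable abbrev nonTangoAffinePoly (k : Type) [Field k] (p : ℕ) :
    MvPolynomial (Fin 2) k :=
  X 0 ^ (p ^ 2 - p) * X 1 ^ p + X 1 ^ p ^ 2
    - X 0 ^ (p ^ 2 - 1) * X 1 - X 0

/-- The affine coordinate ring
`A = k[x, y]/(x^{p²-p}·y^p + y^{p²} - x^{p²-1}·y - x)` of Example 2.3. -/
abbrev nonTangoAffineRing (k : Type) [Field k] (p : ℕ) : Type :=
  MvPolynomial (Fin 2) k ⧸ Ideal.span {nonTangoAffinePoly k p}

namespace NonTango18

open PowerSeries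

variable {k : Type} [Field k] (p : ℕ)

/-- The contraction map whose fixed point parametrizes the curve branch at the origin. -/
noncomputable def Phi (w : PowerSeries k) : PowerSeries k :=
  w ^ (p ^ 2 - p) * X ^ p + X ^ p ^ 2 - w ^ (p ^ 2 - 1) * X

lemma Phi_contract (hp : 0 < p) {a b : PowerSeries k} {n : ℕ}
    (h : (X : PowerSeries k) ^ n ∣ a - b) :
    (X : PowerSeries k) ^ (n + 1) ∣ Phi p a - Phi p b := by
  have key : Phi p a - Phi p b
      = (a ^ (p ^ 2 - p) - b ^ (p ^ 2 - p)) * X ^ p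
        - (a ^ (p ^ 2 - 1) - b ^ (p ^ 2 - 1)) * X := by
    unfold Phi; ring
  rw [key, pow_succ]
  refine dvd_sub ?_ ?_
  · exact mul_dvd_mul (h.trans (sub_dvd_pow_sub_pow a b _)) (dvd_pow_self X hp.ne')
  · exact mul_dvd_mul (h.trans (sub_dvd_pow_sub_pow a b _)) dvd_rfl

/-- Iterates of `Phi` starting at `0`. -/
noncomputable def seqA : ℕ → PowerSeries k := fun n => (Phi p)^[n] 0

lemma seqA_succ (n : ℕ) : seqA p (n + 1) = Phi p (seqA (k := k) p n) :=
  Function.iterate_succ_apply' _ _ _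

lemma seqA_dvd (hp : 0 < p) (n : ℕ) :
    (X : PowerSeries k) ^ n ∣ seqA p (n + 1) - seqA p n := by
  induction n with
  | zero => simp
  | succ n ih =>
      have h2 := Phi_contract p hp ih
      rwa [← seqA_succ p (n + 1), ← seqA_succ p n] at h2

lemma seqA_stab (hp : 0 < p) {n m : ℕ} (h : n ≤ m) :
    (X : PowerSeries k) ^ n ∣ seqA p m - seqA p n := by
  induction m, h using Nat.le_induction with
  | base => simp
  | succ m hm ih =>
      have key : seqA (k := k) p (m + 1) - seqA p n
          = (seqA p (m + 1) - seqA p m) + (seqA p m - seqA p n) := by ring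
      rw [key]
      exact dvd_add ((pow_dvd_pow X hm).trans (seqA_dvd p hp m)) ih

/-- The limit of the iterates. -/
noncomputable def Lser : PowerSeries k :=
  PowerSeries.mk fun n => coeff n (seqA p (n + 1))

lemma coeff_Lser (n : ℕ) : coeff n (Lser (k := k) p) = coeff n (seqA p (n + 1)) :=
  coeff_mk _ _

lemma Lser_sub_dvd (hp : 0 < p) (n : ℕ) :
    (X : PowerSeries k) ^ n ∣ Lser p - seqA p n := by
  rw [X_pow_dvd_iff]
  intro m hm
  rw [map_sub, coeff_Lser]
  have h1 : (X : PowerSeries k) ^ (m + 1) ∣ seqA p n - seqA p (m + 1) :=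
    seqA_stab p hp (by omega)
  have h2 := X_pow_dvd_iff.1 h1 m (Nat.lt_succ_self m)
  rw [map_sub, sub_eq_zero] at h2
  rw [h2, sub_self]

lemma Phi_Lser (hp : 0 < p) : Phi p (Lser p) = Lser (k := k) p := by
  have h : ∀ n, coeff n (Phi p (Lser (k := k) p) - Lser p) = 0 := by
    intro n
    have key : Phi p (Lser p) - Lser (k := k) p
        = (Phi p (Lser p) - Phi p (seqA p n)) + (seqA p (n + 1) - Lser p) := by
      rw [seqA_succ]; ring
    have d1 : (X : PowerSeries k) ^ (n + 1) ∣ Phi p (Lser p) - Phi p (seqA p n) :=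
      Phi_contract p hp (Lser_sub_dvd p hp n)
    have d2 : (X : PowerSeries k) ^ (n + 1) ∣ seqA p (n + 1) - Lser p := by
      have h3 := dvd_neg.2 (Lser_sub_dvd (k := k) p hp (n + 1))
      rwa [neg_sub] at h3
    have := dvd_add d1 d2
    rw [← key] at this
    exact X_pow_dvd_iff.1 this n (Nat.lt_succ_self n)
  have hz : Phi p (Lser p) - Lser (k := k) p = 0 := by
    ext n; simpa using h n
  exact sub_eq_zero.1 hz

lemma X_dvd_Lser (hp : 0 < p) : (X : PowerSeries k) ∣ Lser p := by
  rw [← Phi_Lser p hp]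
  unfold Phi
  refine dvd_sub (dvd_add ?_ ?_) ?_
  · exact Dvd.dvd.mul_left (dvd_pow_self X hp.ne') _
  · exact dvd_pow_self X (by positivity)
  · exact Dvd.dvd.mul_left dvd_rfl _

lemma X_pow_dvd_Lser (hp : 0 < p) : (X : PowerSeries k) ^ p ^ 2 ∣ Lser p := by
  have hX := X_dvd_Lser (k := k) p hp
  have hq0 : 0 < p ^ 2 := by positivity
  have hqp : p ≤ p ^ 2 := Nat.le_self_pow two_ne_zero p
  rw [← Phi_Lser p hp]
  unfold Phi
  refine dvd_sub (dvd_add ?_ ?_) ?_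
  · have : (X : PowerSeries k) ^ (p ^ 2 - p) ∣ (Lser p) ^ (p ^ 2 - p) :=
      pow_dvd_pow_of_dvd hX _
    have e : (X : PowerSeries k) ^ p ^ 2 = X ^ (p ^ 2 - p) * X ^ p := by
      rw [← pow_add]; congr 1; omega
    rw [e]
    exact mul_dvd_mul this dvd_rfl
  · exact dvd_rfl
  · have : (X : PowerSeries k) ^ (p ^ 2 - 1) ∣ (Lser p) ^ (p ^ 2 - 1) :=
      pow_dvd_pow_of_dvd hX _
    have e : (X : PowerSeries k) ^ p ^ 2 = X ^ (p ^ 2 - 1) * X := by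
      rw [← pow_succ]; congr 1; omega
    rw [e]
    exact mul_dvd_mul this dvd_rfl

lemma coeff_q_Lser (hp : 2 ≤ p) : coeff (p ^ 2) (Lser (k := k) p) = 1 := by
  have hp0 : 0 < p := by omega
  have hq := X_pow_dvd_Lser (k := k) p hp0
  have hplt : p < p ^ 2 := by nlinarith
  have hq2 : 2 ≤ p ^ 2 := by nlinarith
  have key : Lser (k := k) p - X ^ p ^ 2
      = (Lser p) ^ (p ^ 2 - p) * X ^ p - (Lser p) ^ (p ^ 2 - 1) * X := by
    conv_lhs => rw [← Phi_Lser p hp0]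
    unfold Phi; ring
  have hd : (X : PowerSeries k) ^ (p ^ 2 + 1) ∣ Lser p - X ^ p ^ 2 := by
    rw [key]
    refine dvd_sub ?_ ?_
    · have e2 : ((X : PowerSeries k) ^ p ^ 2) ^ (p ^ 2 - p) ∣ (Lser p) ^ (p ^ 2 - p) :=
        pow_dvd_pow_of_dvd hq _
      rw [← pow_mul] at e2
      have e1 : (X : PowerSeries k) ^ (p ^ 2 + 1) ∣ X ^ (p ^ 2 * (p ^ 2 - p) + p) := by
        apply pow_dvd_pow
        have h1 : 1 ≤ p ^ 2 - p := by omega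
        have h2 : p ^ 2 * 1 ≤ p ^ 2 * (p ^ 2 - p) := Nat.mul_le_mul_left _ h1
        omega
      refine e1.trans ?_
      rw [pow_add]
      exact mul_dvd_mul e2 dvd_rfl
    · have e2 : ((X : PowerSeries k) ^ p ^ 2) ^ (p ^ 2 - 1) ∣ (Lser p) ^ (p ^ 2 - 1) :=
        pow_dvd_pow_of_dvd hq _
      rw [← pow_mul] at e2
      have e1 : (X : PowerSeries k) ^ (p ^ 2 + 1) ∣ X ^ (p ^ 2 * (p ^ 2 - 1) + 1) := by
        apply pow_dvd_pow
        have h1 : 1 ≤ p ^ 2 - 1 := by omega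
        have h2 : p ^ 2 * 1 ≤ p ^ 2 * (p ^ 2 - 1) := Nat.mul_le_mul_left _ h1
        omega
      refine e1.trans ?_
      rw [pow_add, pow_one]
      exact mul_dvd_mul e2 dvd_rfl
  have hc := X_pow_dvd_iff.1 hd (p ^ 2) (Nat.lt_succ_self _)
  rw [map_sub, coeff_X_pow, if_pos rfl, sub_eq_zero] at hc
  exact hc

lemma Lser_ne_zero (hp : 2 ≤ p) : Lser (k := k) p ≠ 0 := by
  intro h
  have := coeff_q_Lser (k := k) p hp
  rw [h] at this
  simp at this

lemma order_Lser (hp : 2 ≤ p) : order (Lser (k := k) p) = (p ^ 2 : ℕ) := by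
  rw [order_eq_nat]
  refine ⟨by rw [coeff_q_Lser p hp]; exact one_ne_zero, fun i hi => ?_⟩
  exact X_pow_dvd_iff.1 (X_pow_dvd_Lser p (by omega)) i hi

lemma order_pow' {f : PowerSeries k} {m : ℕ} (h : order f = (m : ℕ∞)) (n : ℕ) :
    order (f ^ n) = ((n * m : ℕ) : ℕ∞) := by
  induction n with
  | zero => simp [order_one]
  | succ n ih =>
      rw [pow_succ, order_mul, ih, h, ← Nat.cast_add]
      congr 1
      ring

lemma transcendental_aux {L : PowerSeries k} (h0 : constantCoeff L = 0) (hL : L ≠ 0) :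
    ∀ (n : ℕ) (P : Polynomial k), P.natDegree ≤ n →
      Polynomial.eval₂ C L P = 0 → P = 0 := by
  intro n
  induction n with
  | zero =>
      intro P hdeg hev
      have hPc := Polynomial.eq_C_of_natDegree_le_zero hdeg
      rw [hPc, Polynomial.eval₂_C] at hev
      set c := P.coeff 0
      have : c = 0 := by
        have := congrArg (constantCoeff) hev
        simpa using this
      rw [hPc, this, map_zero]
  | succ n ih =>
      intro P hdeg hev
      have hc0 : P.coeff 0 = 0 := by
        have h1 := congrArg (constantCoeff) hev
        rw [Polynomial.hom_eval₂, h0, Polynomial.eval₂_at_zero] at h1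
        simpa using h1
      have hP : Polynomial.X * P.divX = P := by
        conv_rhs => rw [← Polynomial.X_mul_divX_add P]
        rw [hc0, map_zero, add_zero]
      rw [← hP, Polynomial.eval₂_mul, Polynomial.eval₂_X] at hev
      have hdiv : Polynomial.eval₂ C L P.divX = 0 := by
        rcases mul_eq_zero.1 hev with h | h
        · exact absurd h hL
        · exact h
      have hdeg' : P.divX.natDegree ≤ n := by
        have := Polynomial.natDegree_divX_eq_natDegree_tsub_one (p := P)
        omega
      have := ih P.divX hdeg' hdiv
      rw [← hP, this, mul_zero]


section Main

variable (k : Type) [Field k] (p : ℕ)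

/-- Evaluation of polynomials at the parametrization `(Lser p, X)`. -/
noncomputable def psi : MvPolynomial (Fin 2) k →+* PowerSeries k :=
  (MvPolynomial.aeval ![Lser p, X]).toRingHom

lemma psi_X0 : psi k p (MvPolynomial.X 0) = Lser p := by
  show MvPolynomial.aeval ![Lser p, X] (MvPolynomial.X 0) = Lser p
  simp

lemma psi_X1 : psi k p (MvPolynomial.X 1) = X := by
  show MvPolynomial.aeval ![Lser p, X] (MvPolynomial.X 1) = X
  simp

lemma psi_C (c : k) : psi k p (MvPolynomial.C c) = C c := by
  show MvPolynomial.aeval ![Lser p, X] (MvPolynomial.C c) = C c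
  rw [MvPolynomial.aeval_C, PowerSeries.algebraMap_apply]
  simp

lemma psi_f (hp0 : 0 < p) : psi k p (nonTangoAffinePoly k p) = 0 := by
  have hfix := Phi_Lser (k := k) p hp0
  unfold Phi at hfix
  show MvPolynomial.aeval ![Lser p, X] (nonTangoAffinePoly k p) = 0
  simp only [nonTangoAffinePoly, map_add, map_sub, map_mul, map_pow, MvPolynomial.aeval_X,
    Matrix.cons_val_zero, Matrix.cons_val_one, Matrix.head_cons]
  linear_combination hfix

/-- The parametrization map on the affine coordinate ring. -/
noncomputable def phi (hp0 : 0 < p) : nonTangoAffineRing k p →+* PowerSeries k :=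
  Ideal.Quotient.lift _ (psi k p) (by
    intro a ha
    rw [Ideal.mem_span_singleton] at ha
    obtain ⟨c, rfl⟩ := ha
    rw [map_mul, psi_f k p hp0, zero_mul])

lemma phi_mk (hp0 : 0 < p) (P : MvPolynomial (Fin 2) k) :
    phi k p hp0 (Ideal.Quotient.mk (Ideal.span {nonTangoAffinePoly k p}) P) = psi k p P :=
  Ideal.Quotient.lift_mk _ _ _

lemma phi_injective (hp0 : 0 < p) (hp2 : 2 ≤ p) [IsDomain (nonTangoAffineRing k p)] :
    Function.Injective (phi k p hp0) := by
  classical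
  set mkq := Ideal.Quotient.mk (Ideal.span {nonTangoAffinePoly k p}) with hmkq
  let θ : Polynomial k →+* nonTangoAffineRing k p :=
    (Polynomial.aeval (mkq (MvPolynomial.X 0))).toRingHom
  letI : Algebra (Polynomial k) (nonTangoAffineRing k p) := θ.toAlgebra
  have halg : ∀ P : Polynomial k, algebraMap (Polynomial k) (nonTangoAffineRing k p) P = θ P :=
    fun _ => rfl
  have hθX : θ Polynomial.X = mkq (MvPolynomial.X 0) := Polynomial.aeval_X _
  have hθC : ∀ c : k, θ (Polynomial.C c) = mkq (MvPolynomial.C c) := by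
    intro c
    show Polynomial.aeval (mkq (MvPolynomial.X 0)) (Polynomial.C c) = _
    rw [Polynomial.aeval_C]
    rfl
  -- the element `y` is integral over `k[x]`
  have hyint : IsIntegral (Polynomial k) (mkq (MvPolynomial.X 1)) := by
    refine ⟨Polynomial.X ^ p ^ 2 + (Polynomial.C (Polynomial.X ^ (p ^ 2 - p)) * Polynomial.X ^ p
      - Polynomial.C (Polynomial.X ^ (p ^ 2 - 1)) * Polynomial.X - Polynomial.C Polynomial.X),
      ?_, ?_⟩
    · apply Polynomial.monic_X_pow_add
      have hplt : p < p ^ 2 := by nlinarith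
      have hd : (Polynomial.C (Polynomial.X ^ (p ^ 2 - p) : Polynomial k) * Polynomial.X ^ p
          - Polynomial.C (Polynomial.X ^ (p ^ 2 - 1)) * Polynomial.X
          - Polynomial.C Polynomial.X).degree ≤ (p : WithBot ℕ) := by
        refine le_trans (Polynomial.degree_sub_le _ _) (max_le ?_ ?_)
        · refine le_trans (Polynomial.degree_sub_le _ _) (max_le ?_ ?_)
          · exact Polynomial.degree_C_mul_X_pow_le _ _
          · refine le_trans (Polynomial.degree_C_mul_X_le _) ?_
            exact_mod_cast Nat.one_le_iff_ne_zero.2 (by omega)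
        · exact le_trans Polynomial.degree_C_le (by exact_mod_cast Nat.zero_le p)
      exact lt_of_le_of_lt hd (by exact_mod_cast hplt)
    · rw [← Polynomial.aeval_def]
      have hcalc : Polynomial.aeval (mkq (MvPolynomial.X 1))
          (Polynomial.X ^ p ^ 2 + (Polynomial.C (Polynomial.X ^ (p ^ 2 - p)) * Polynomial.X ^ p
            - Polynomial.C (Polynomial.X ^ (p ^ 2 - 1)) * Polynomial.X
            - Polynomial.C (Polynomial.X : Polynomial k)))
          = mkq ((MvPolynomial.X 1) ^ p ^ 2 + ((MvPolynomial.X 0) ^ (p ^ 2 - p)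
              * (MvPolynomial.X 1) ^ p
            - (MvPolynomial.X 0) ^ (p ^ 2 - 1) * MvPolynomial.X 1 - MvPolynomial.X 0)) := by
        simp only [map_add, map_sub, map_mul, map_pow, Polynomial.aeval_X, Polynomial.aeval_C,
          halg, hθX]
      rw [hcalc, show (MvPolynomial.X 1 : MvPolynomial (Fin 2) k) ^ p ^ 2
          + ((MvPolynomial.X 0) ^ (p ^ 2 - p) * (MvPolynomial.X 1) ^ p
            - (MvPolynomial.X 0) ^ (p ^ 2 - 1) * MvPolynomial.X 1 - MvPolynomial.X 0)
          = nonTangoAffinePoly k p by unfold nonTangoAffinePoly; ring]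
      exact Ideal.Quotient.eq_zero_iff_mem.2 (Ideal.subset_span rfl)
  have htop : Algebra.adjoin (Polynomial k) {(mkq (MvPolynomial.X 1))} = ⊤ := by
    rw [eq_top_iff]
    rintro a -
    obtain ⟨P, rfl⟩ := Ideal.Quotient.mk_surjective a
    induction P using MvPolynomial.induction_on with
    | C c =>
        rw [show (mkq (MvPolynomial.C c)) = θ (Polynomial.C c) from (hθC c).symm]
        exact Subalgebra.algebraMap_mem _ _
    | add P Q hP hQ =>
        rw [map_add]
        exact add_mem hP hQ
    | mul_X P i hP =>
        rw [map_mul]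
        refine mul_mem hP ?_
        fin_cases i
        · show mkq (MvPolynomial.X 0) ∈ _
          rw [show (mkq (MvPolynomial.X 0)) = θ Polynomial.X from hθX.symm]
          exact Subalgebra.algebraMap_mem _ _
        · show mkq (MvPolynomial.X 1) ∈ _
          exact Algebra.subset_adjoin rfl
  haveI hint : Algebra.IsIntegral (Polynomial k) (nonTangoAffineRing k p) :=
    ⟨fun z => IsIntegral.of_mem_of_fg ⊤ (htop ▸ hyint.fg_adjoin_singleton) z trivial⟩
  rw [RingHom.injective_iff_ker_eq_bot]
  apply Ideal.eq_bot_of_comap_eq_bot (R := Polynomial k)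
  rw [eq_bot_iff]
  intro P hP
  rw [Ideal.mem_comap, RingHom.mem_ker, halg] at hP
  -- compute `phi (θ P)` as evaluation of `P` at `Lser p`
  have hcomp : (phi k p hp0).comp (algebraMap k (nonTangoAffineRing k p)) =
      (C : k →+* PowerSeries k) := by
    apply RingHom.ext
    intro c
    show phi k p hp0 (algebraMap k (nonTangoAffineRing k p) c) = C c
    have : algebraMap k (nonTangoAffineRing k p) c = mkq (MvPolynomial.C c) := rfl
    rw [this, hmkq, phi_mk, psi_C]
  have hev : Polynomial.eval₂ C (Lser p) P = 0 := by
    have hθP : θ P = Polynomial.eval₂ (algebraMap k (nonTangoAffineRing k p))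
        (mkq (MvPolynomial.X 0)) P := by
      show Polynomial.aeval _ P = _
      rw [Polynomial.aeval_def]
    rw [hθP] at hP
    rw [Polynomial.hom_eval₂] at hP
    rw [hcomp] at hP
    rw [hmkq, phi_mk, psi_X0] at hP
    exact hP
  have h0 : constantCoeff (Lser (k := k) p) = 0 := by
    have := X_dvd_Lser (k := k) p hp0
    rwa [X_dvd_iff] at this
  have hLne : Lser (k := k) p ≠ 0 := Lser_ne_zero p hp2
  rw [Ideal.mem_bot]
  exact transcendental_aux h0 hLne P.natDegree P le_rfl hev

/-- Frobenius descent step in a field of characteristic `p`. -/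
lemma frob_step {K : Type} [Field K] [hP : Fact p.Prime] [CharP K p] (hp0 : 0 < p)
    (x y g : K) (hg : g ^ p ^ 2 = x ^ (p ^ 2 - p) * y ^ p + y ^ p ^ 2) :
    (g - y) ^ p = x ^ (p - 1) * y := by
  have e1 : (p - 1) * p = p ^ 2 - p := by rw [Nat.sub_mul, one_mul, pow_two]
  have e2 : p * p = p ^ 2 := (pow_two p).symm
  have hfact : (x ^ (p - 1) * y + y ^ p) ^ p = x ^ (p ^ 2 - p) * y ^ p + y ^ p ^ 2 := by
    rw [add_pow_char, mul_pow, ← pow_mul, ← pow_mul, e1, e2]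
  have hgp : (g ^ p) ^ p = (x ^ (p - 1) * y + y ^ p) ^ p := by
    rw [hfact, ← pow_mul, e2, hg]
  have hfr : g ^ p = x ^ (p - 1) * y + y ^ p := by
    have h5 : (g ^ p - (x ^ (p - 1) * y + y ^ p)) ^ p = 0 := by
      rw [sub_pow_char, hgp, sub_self]
    exact sub_eq_zero.1 ((pow_eq_zero_iff hp0.ne').1 h5)
  rw [sub_pow_char, hfr]
  ring

/-- Clearing denominators for a `p`-th power in the fraction field. -/
lemma pth_root_extract {A : Type} [CommRing A] [IsDomain A] (c : A) {h : FractionRing A}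
    (hh : h ^ p = algebraMap A (FractionRing A) c) :
    ∃ a b : A, b ≠ 0 ∧ a ^ p = c * b ^ p := by
  obtain ⟨⟨a, b⟩, hab⟩ := IsLocalization.surj (nonZeroDivisors A) h
  refine ⟨a, b, nonZeroDivisors.ne_zero b.2, ?_⟩
  apply IsFractionRing.injective A (FractionRing A)
  rw [map_pow, ← hab, mul_pow, hh, map_mul, map_pow]

end Main

end NonTango18

open MvPolynomial in
/-- Let `k` be an algebraically closed field of
characteristic `p > 3` and `A = k[x, y]/(x^{p²-p}·y^p + y^{p²} - x^{p²-1}·y - x)`,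
an integral domain with fraction field `K`.  Then the element
`x^{p²-p}·y^p + y^{p²}` of `K` is not a `p²`-th power in `K`. -/
theorem statement18 (k : Type) [Field k] [IsAlgClosed k]
    (p : ℕ) [Fact p.Prime] [CharP k p] (hp : 3 < p)
    [IsDomain (nonTangoAffineRing k p)] :
    ¬ ∃ g : FractionRing (nonTangoAffineRing k p),
      g ^ p ^ 2 =
        algebraMap (nonTangoAffineRing k p) (FractionRing (nonTangoAffineRing k p))
          (Ideal.Quotient.mk (Ideal.span {nonTangoAffinePoly k p})
            (X 0 ^ (p ^ 2 - p) * X 1 ^ p + X 1 ^ p ^ 2)) := by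
  rintro ⟨g, hg⟩
  have hp0 : 0 < p := by omega
  have hp2 : 2 ≤ p := by omega
  haveI : CharP (nonTangoAffineRing k p) p :=
    charP_of_injective_ringHom (algebraMap k (nonTangoAffineRing k p)).injective p
  haveI : CharP (FractionRing (nonTangoAffineRing k p)) p :=
    charP_of_injective_ringHom
      (IsFractionRing.injective (nonTangoAffineRing k p)
        (FractionRing (nonTangoAffineRing k p))) p
  have hkey : (g - algebraMap (nonTangoAffineRing k p) (FractionRing (nonTangoAffineRing k p))
        (Ideal.Quotient.mk (Ideal.span {nonTangoAffinePoly k p}) (X 1))) ^ p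
      = algebraMap (nonTangoAffineRing k p) (FractionRing (nonTangoAffineRing k p))
          (Ideal.Quotient.mk (Ideal.span {nonTangoAffinePoly k p}) (X 0)) ^ (p - 1)
        * algebraMap (nonTangoAffineRing k p) (FractionRing (nonTangoAffineRing k p))
          (Ideal.Quotient.mk (Ideal.span {nonTangoAffinePoly k p}) (X 1)) :=
    NonTango18.frob_step p hp0 _ _ g (by
      rw [hg]; simp only [map_add, map_mul, map_pow])
  obtain ⟨a, b, hb, hab⟩ := NonTango18.pth_root_extract p
      (Ideal.Quotient.mk (Ideal.span {nonTangoAffinePoly k p}) (X 0 ^ (p - 1) * X 1))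
      (h := g - algebraMap (nonTangoAffineRing k p) (FractionRing (nonTangoAffineRing k p))
        (Ideal.Quotient.mk (Ideal.span {nonTangoAffinePoly k p}) (X 1))) (by
        rw [hkey]; simp only [map_mul, map_pow])
  have hphi := congrArg (NonTango18.phi k p hp0) hab
  simp only [map_pow, map_mul, NonTango18.phi_mk, NonTango18.psi_X0,
    NonTango18.psi_X1] at hphi
  have hLne : NonTango18.Lser (k := k) p ≠ 0 := NonTango18.Lser_ne_zero p hp2
  have hβ : NonTango18.phi k p hp0 b ≠ 0 := fun h =>
    hb ((NonTango18.phi_injective k p hp0 hp2) (by rw [h, map_zero]))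
  have hα : NonTango18.phi k p hp0 a ≠ 0 := by
    intro h
    rw [h, zero_pow hp0.ne'] at hphi
    exact (mul_ne_zero (mul_ne_zero (pow_ne_zero _ hLne) PowerSeries.X_ne_zero)
      (pow_ne_zero _ hβ)) hphi.symm
  obtain ⟨na, hna⟩ := WithTop.ne_top_iff_exists.1
    (lt_top_iff_ne_top.1 (PowerSeries.order_finite_iff_ne_zero.2 hα))
  obtain ⟨nb, hnb⟩ := WithTop.ne_top_iff_exists.1
    (lt_top_iff_ne_top.1 (PowerSeries.order_finite_iff_ne_zero.2 hβ))
  have hord := congrArg PowerSeries.order hphi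
  rw [NonTango18.order_pow' hna.symm p, PowerSeries.order_mul, PowerSeries.order_mul,
    NonTango18.order_pow' (NonTango18.order_Lser p hp2) (p - 1),
    NonTango18.order_pow' hnb.symm p, PowerSeries.order_X] at hord
  have hnat : p * na = (p - 1) * p ^ 2 + 1 + p * nb := by exact_mod_cast hord
  have hdvd : p ∣ (p - 1) * p ^ 2 + 1 + p * nb := by
    rw [← hnat]; exact dvd_mul_right p na
  have h2 : p ∣ (p - 1) * p ^ 2 + p * nb :=
    dvd_add (Dvd.dvd.mul_left (dvd_pow_self p two_ne_zero) _) (dvd_mul_right p nb)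
  have h1 : p ∣ 1 := by
    have e : (p - 1) * p ^ 2 + 1 + p * nb = ((p - 1) * p ^ 2 + p * nb) + 1 := by ring
    rw [e] at hdvd
    exact (Nat.dvd_add_right h2).1 hdvd
  have := Nat.le_of_dvd one_pos h1
  omega
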